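/- Let b : ℕ → ℝ satisfy b j ≥ 0 for all j, let c > 0, and let q : ℕ → ℝ be defined by q 0 = 0 and q (i+1) = max(q i + b i − c, 0). Fix i ∈ ℕ and suppose that for every natural number k with 1 ≤ k ≤ i+1 one has ∑_{j=i+1−k}^{i} b j < k·c. Then for every natural number l with 0 ≤ l ≤ i one has (i+1−l)·c − ∑_{j=l}^{i} b j > q l; in particular (taking l = i), c − b i > q i. -/

import Mathlib

/-- The sufficiency induction claim in Appendix B of the paper: if all `i+1`
backward partial-sum conditions hold, then for every `l ≤ i` the quantity
`(i+1-l)·c` minus the sum of runtimes from `l` to `i` strictly exceeds the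
queueing delay `q l`; in particular (`l = i`), `c - b i > q i`. -/
theorem sufficiency_induction
    (b : ℕ → ℝ) (hb : ∀ j, 0 ≤ b j) (c : ℝ) (hc : 0 < c)
    (q : ℕ → ℝ) (hq0 : q 0 = 0)
    (hq : ∀ i, q (i + 1) = max (q i + b i - c) 0)
    (i : ℕ)
    (h : ∀ k : ℕ, 1 ≤ k → k ≤ i + 1 →
      ∑ j ∈ Finset.Icc (i + 1 - k) i, b j < (k : ℝ) * c) :
    (∀ l : ℕ, l ≤ i →
      ((i + 1 - l : ℕ) : ℝ) * c - ∑ j ∈ Finset.Icc l i, b j > q l)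
    ∧ c - b i > q i := by
  have main : ∀ l : ℕ, l ≤ i →
      ((i + 1 - l : ℕ) : ℝ) * c - ∑ j ∈ Finset.Icc l i, b j > q l := by
    intro l
    induction l with
    | zero =>
      intro _
      have := h (i + 1) (by omega) (le_refl _)
      simpa [hq0] using this
    | succ l ih =>
      intro hli
      have hl : l ≤ i := by omega
      have IH := ih hl
      have hsplit : ∑ j ∈ Finset.Icc l i, b j
          = b l + ∑ j ∈ Finset.Icc (l + 1) i, b j := by
        rw [← Finset.sum_Ioc_add_eq_sum_Icc hl]
        rw [show Finset.Ioc l i = Finset.Icc (l+1) i by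
          ext x; simp only [Finset.mem_Ioc, Finset.mem_Icc]; omega]
        ring
      have hcast : ((i + 1 - l : ℕ) : ℝ) = ((i + 1 - (l + 1) : ℕ) : ℝ) + 1 := by
        have : i + 1 - l = (i + 1 - (l + 1)) + 1 := by omega
        rw [this]; push_cast; ring
      have hpos : (0:ℝ) < ((i + 1 - (l + 1) : ℕ) : ℝ) * c - ∑ j ∈ Finset.Icc (l+1) i, b j := by
        have := h (i - l) (by omega) (by omega)
        have heq : i + 1 - (i - l) = l + 1 := by omega
        rw [heq] at this
        have : ∑ j ∈ Finset.Icc (l+1) i, b j < ((i + 1 - (l + 1) : ℕ) : ℝ) * c := by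
          have h2 : ((i - l : ℕ) : ℝ) = ((i + 1 - (l + 1) : ℕ) : ℝ) := by
            norm_cast; omega
          linarith [this, h2 ▸ this]
        linarith
      rw [hq]
      rcases max_cases (q l + b l - c) 0 with ⟨hm, _⟩ | ⟨hm, _⟩
      · rw [hm]
        rw [hsplit, hcast] at IH
        linarith
      · rw [hm]
        linarith
  refine ⟨main, ?_⟩
  have := main i le_rfl
  simpa using this
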